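/- For a non-negative integer m and a non-negative integer i, the limit as z tends to -m of (z + m)^(i+1) * Γ^(i)(z) equals (-1)^m * (-1)^i * i! / m!, where Γ^(i) is the i-th derivative of the Gamma function. -/

import Mathlib

open Filter Topology Metric Finset

/-- Gamma recurrence iterated. -/
lemma gamma_shift_aux (n : ℕ) : ∀ z : ℂ, (∀ k < n, z + k ≠ 0) →
    Complex.Gamma (z + n) = (∏ k ∈ Finset.range n, (z + k)) * Complex.Gamma z := by
  induction n with
  | zero => intro z _; simp
  | succ n IH =>
    intro z hz
    have h1 : z + (n : ℂ) ≠ 0 := hz n (Nat.lt_succ_self n)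
    have : Complex.Gamma (z + (n + 1 : ℕ)) = (z + n) * Complex.Gamma (z + n) := by
      push_cast
      rw [← Complex.Gamma_add_one (z + n) h1]
      ring_nf
    rw [this, IH z (fun k hk => hz k (hk.trans (Nat.lt_succ_self n))), Finset.prod_range_succ]
    ring

lemma prod_neg_one_sub (i : ℕ) :
    ∏ l ∈ Finset.range i, (-1 - l : ℂ) = (-1) ^ i * i.factorial := by
  induction i with
  | zero => simp
  | succ i IH =>
    rw [Finset.prod_range_succ, IH, Nat.factorial_succ]
    push_cast
    ring

lemma prod_sub_nat (m : ℕ) :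
    ∏ k ∈ Finset.range m, ((k : ℂ) - m) = (-1) ^ m * m.factorial := by
  induction m with
  | zero => simp
  | succ m IH =>
    rw [Finset.prod_range_succ']
    have h : ∀ k ∈ Finset.range m, ((k + 1 : ℕ) : ℂ) - ((m + 1 : ℕ) : ℂ) = (k : ℂ) - m := by
      intro k _; push_cast; ring
    rw [Finset.prod_congr rfl h, IH, Nat.factorial_succ]
    push_cast
    ring

theorem gamma_deriv_leading_coeff (m i : ℕ) :
    Filter.Tendsto (fun z : ℂ => (z + m) ^ (i + 1) * iteratedDeriv i Complex.Gamma z)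
      (nhdsWithin (-(m : ℂ)) {(-(m : ℂ))}ᶜ)
      (nhds ((-1 : ℂ) ^ m * (-1 : ℂ) ^ i * (Nat.factorial i : ℂ) / (Nat.factorial m : ℂ))) := by
  set a : ℂ := -(m : ℂ) with ha
  set P : ℂ → ℂ := fun z => ∏ k ∈ Finset.range m, (z + k) with hP
  set g : ℂ → ℂ := fun z => Complex.Gamma (z + (m + 1 : ℕ)) * (P z)⁻¹ with hg
  -- P nonzero on the ball
  have hPne : ∀ z ∈ ball a (1/2 : ℝ), P z ≠ 0 := by
    intro z hz
    rw [hP, Finset.prod_ne_zero_iff]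
    intro k hk
    rw [Finset.mem_range] at hk
    intro h0
    have hz' : z = -(k : ℂ) := by linear_combination h0
    rw [mem_ball, dist_eq_norm, hz', ha] at hz
    have : (-(k : ℂ)) - (-(m : ℂ)) = ((m - k : ℕ) : ℂ) := by
      push_cast [Nat.cast_sub hk.le]; ring
    rw [this] at hz
    have h1 : (1 : ℝ) ≤ ‖((m - k : ℕ) : ℂ)‖ := by
      rw [Complex.norm_natCast]
      exact_mod_cast Nat.one_le_iff_ne_zero.mpr (Nat.sub_ne_zero_of_lt hk)
    linarith
  -- g is analytic on the ball
  have hgan : AnalyticOnNhd ℂ g (ball a (1/2 : ℝ)) := by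
    intro z hz
    have hGam : AnalyticAt ℂ Complex.Gamma (z + (m + 1 : ℕ)) := by
      rw [Complex.analyticAt_iff_eventually_differentiableAt]
      have hre : 0 < (z + (m + 1 : ℕ)).re := by
        rw [mem_ball, dist_eq_norm, ha] at hz
        have h1 : |(z - -(m : ℂ)).re| ≤ ‖z - -(m : ℂ)‖ := by
          exact Complex.abs_re_le_norm _
        have h2 : (z + (m + 1 : ℕ)).re = (z - -(m : ℂ)).re + 1 := by
          push_cast
          simp [Complex.add_re, Complex.sub_re, Complex.neg_re]
          ring
        rw [h2]
        have := abs_le.mp h1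
        linarith
      have hopen : ∀ᶠ w in 𝓝 (z + (m + 1 : ℕ)), 0 < w.re :=
        (Complex.continuous_re.tendsto _).eventually (eventually_gt_nhds hre)
      filter_upwards [hopen] with w hw
      apply Complex.differentiableAt_Gamma
      intro n hn
      rw [hn] at hw
      simp only [Complex.neg_re, Complex.natCast_re] at hw
      have : (0:ℝ) ≤ (n:ℝ) := n.cast_nonneg
      linarith
    have h1 : AnalyticAt ℂ (fun w : ℂ => Complex.Gamma (w + (m + 1 : ℕ))) z := by
      have := hGam.comp (f := fun w : ℂ => w + ((m + 1 : ℕ) : ℂ))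
        ((analyticAt_id).add analyticAt_const)
      simpa [Function.comp_def] using this
    have h2 : AnalyticAt ℂ P z := by
      rw [hP]
      exact Finset.analyticAt_fun_prod _ (fun k _ => (analyticAt_id).add analyticAt_const)
    exact h1.mul (h2.inv (hPne z hz))
  -- A = dslope of g at a, analytic on the ball
  set A : ℂ → ℂ := dslope g a with hA
  have hAan : AnalyticOnNhd ℂ A (ball a (1/2 : ℝ)) := by
    intro z hz
    rcases eq_or_ne z a with heq | hne
    · obtain ⟨p, hp⟩ := hgan a (heq ▸ hz)
      rw [heq]
      exact hp.has_fpower_series_dslope_fslope.analyticAt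
    · have h1 : AnalyticAt ℂ (fun w : ℂ => (w - a)⁻¹ * (g w - g a)) z := by
        refine AnalyticAt.mul (AnalyticAt.inv ((analyticAt_id).sub analyticAt_const) ?_)
          ((hgan z hz).sub analyticAt_const)
        exact sub_ne_zero.mpr hne
      refine h1.congr ?_
      filter_upwards [isOpen_compl_singleton.mem_nhds (show z ∈ ({a}ᶜ : Set ℂ) from hne)] with w hw
      rw [hA, dslope_of_ne g hw, slope_def_field]
      field_simp
  -- iterated derivatives of A analytic on the ball
  have hAd : ∀ j : ℕ, AnalyticOnNhd ℂ (iteratedDeriv j A) (ball a (1/2 : ℝ)) := by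
    intro j
    have := hAan.iterated_deriv j
    rwa [iteratedDeriv_eq_iterate]
  -- the key identity on the punctured ball
  set S : Set ℂ := ball a (1/2 : ℝ) ∩ {a}ᶜ with hS
  have hSopen : IsOpen S := isOpen_ball.inter isOpen_compl_singleton
  have hkey : ∀ z ∈ S, Complex.Gamma z = A z + g a * (z - a)⁻¹ := by
    rintro z ⟨hz1, hz2⟩
    have hzne : z - a ≠ 0 := sub_ne_zero.mpr hz2
    have hGrec : Complex.Gamma (z + (m + 1 : ℕ)) = (P z * (z - a)) * Complex.Gamma z := by
      have := gamma_shift_aux (m + 1) z ?_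
      · rw [this, Finset.prod_range_succ, hP]
        have : z + (m : ℂ) = z - a := by rw [ha]; ring
        rw [this]
      · intro k hk
        rcases Nat.lt_succ_iff_lt_or_eq.mp hk with hk' | rfl
        · intro h0
          exact hPne z hz1 (Finset.prod_eq_zero (Finset.mem_range.mpr hk') h0)
        · intro h0
          refine hz2 ?_
          rw [Set.mem_singleton_iff, ha]
          linear_combination h0
    have hgz : g z = (z - a) * Complex.Gamma z := by
      rw [hg]
      dsimp only
      rw [hGrec]
      field_simp [hPne z hz1]
    have hdsl : (z - a) * A z = g z - g a := by
      have := sub_smul_dslope g a z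
      rwa [smul_eq_mul, ← hA] at this
    have : (z - a) * (A z + g a * (z - a)⁻¹) = (z - a) * Complex.Gamma z := by
      rw [mul_add, hdsl, hgz]
      field_simp
      ring
    exact (mul_left_cancel₀ hzne this).symm
  -- main induction: formula for iterated derivatives of Gamma on S
  have hmain : ∀ j : ℕ, ∀ z ∈ S, iteratedDeriv j Complex.Gamma z =
      iteratedDeriv j A z +
        g a * ((∏ l ∈ Finset.range j, (-1 - l : ℂ)) * (z - a) ^ (-1 - j : ℤ)) := by
    intro j
    induction j with
    | zero =>
      intro z hz
      simp only [iteratedDeriv_zero, Finset.range_zero, Finset.prod_empty, one_mul,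
        Nat.cast_zero, sub_zero]
      rw [hkey z hz]
      congr 1
      rw [zpow_neg_one]
    | succ j IH =>
      intro z hz
      have hzne : z - a ≠ 0 := sub_ne_zero.mpr hz.2
      rw [iteratedDeriv_succ]
      have hev : iteratedDeriv j Complex.Gamma =ᶠ[𝓝 z] fun w =>
          iteratedDeriv j A w +
            g a * ((∏ l ∈ Finset.range j, (-1 - l : ℂ)) * (w - a) ^ (-1 - j : ℤ)) := by
        filter_upwards [hSopen.mem_nhds hz] with w hw
        exact IH w hw
      rw [hev.deriv_eq]
      have d1 : DifferentiableAt ℂ (iteratedDeriv j A) z := (hAd j z hz.1).differentiableAt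
      have d2 : DifferentiableAt ℂ (fun w : ℂ => (w - a) ^ (-1 - j : ℤ)) z :=
        ((differentiableAt_id.sub_const a).zpow (Or.inl hzne))
      rw [deriv_fun_add d1 (by exact (d2.const_mul _).const_mul _), deriv_const_mul _ (d2.const_mul _),
        deriv_const_mul _ d2, ← iteratedDeriv_succ]
      congr 1
      have hder : deriv (fun w : ℂ => (w - a) ^ (-1 - j : ℤ)) z =
          (-1 - j : ℤ) * (z - a) ^ (-1 - j - 1 : ℤ) := by
        rw [deriv_comp_sub_const (f := fun w : ℂ => w ^ (-1 - j : ℤ)), deriv_zpow]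
      rw [hder, Finset.prod_range_succ]
      have hexp : (-1 - (j : ℤ) - 1) = (-1 - (j + 1 : ℕ) : ℤ) := by push_cast; ring
      rw [hexp]
      push_cast
      ring
  -- now the limit
  have hball : ball a (1/2 : ℝ) ∈ 𝓝 a := ball_mem_nhds a (by norm_num)
  have hevS : ∀ᶠ z in 𝓝[≠] a, z ∈ S := by
    filter_upwards [mem_nhdsWithin_of_mem_nhds hball, self_mem_nhdsWithin] with z h1 h2
    exact ⟨h1, h2⟩
  have heq : ∀ᶠ z in 𝓝[≠] a, (z + m) ^ (i + 1) * iteratedDeriv i Complex.Gamma z =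
      (z - a) ^ (i + 1) * iteratedDeriv i A z +
        g a * (∏ l ∈ Finset.range i, (-1 - l : ℂ)) := by
    filter_upwards [hevS] with z hz
    have hzm : z + (m : ℂ) = z - a := by rw [ha]; ring
    have hzne : z - a ≠ 0 := sub_ne_zero.mpr hz.2
    rw [hzm, hmain i z hz, mul_add]
    congr 1
    have : (z - a) ^ (i + 1) * (z - a) ^ (-1 - i : ℤ) = 1 := by
      rw [← zpow_natCast (z - a) (i + 1), ← zpow_add₀ hzne]
      have h0 : ((i + 1 : ℕ) : ℤ) + (-1 - (i : ℤ)) = 0 := by push_cast; ring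
      rw [h0, zpow_zero]
    calc (z - a) ^ (i + 1) * (g a * ((∏ l ∈ Finset.range i, (-1 - l : ℂ))
            * (z - a) ^ (-1 - i : ℤ)))
        = g a * (∏ l ∈ Finset.range i, (-1 - l : ℂ))
            * ((z - a) ^ (i + 1) * (z - a) ^ (-1 - i : ℤ)) := by ring
      _ = g a * (∏ l ∈ Finset.range i, (-1 - l : ℂ)) := by rw [this, mul_one]
  rw [Filter.tendsto_congr' heq]
  -- compute constants
  have hga : g a = (-1 : ℂ) ^ m / m.factorial := by
    rw [hg]
    dsimp only
    have h1 : a + (m + 1 : ℕ) = 1 := by rw [ha]; push_cast; ring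
    have h2 : P a = (-1 : ℂ) ^ m * m.factorial := by
      rw [hP]
      dsimp only
      rw [← prod_sub_nat m]
      exact Finset.prod_congr rfl fun k _ => by rw [ha]; ring
    rw [h1, h2, Complex.Gamma_one, one_mul]
    rw [mul_inv, div_eq_mul_inv]
    congr 1
    rw [← inv_pow, inv_neg, inv_one]
  have hvalue : g a * (∏ l ∈ Finset.range i, (-1 - l : ℂ)) =
      (-1 : ℂ) ^ m * (-1 : ℂ) ^ i * (Nat.factorial i : ℂ) / (Nat.factorial m : ℂ) := by
    rw [hga, prod_neg_one_sub]
    field_simp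
  have hlim : Filter.Tendsto (fun z : ℂ => (z - a) ^ (i + 1) * iteratedDeriv i A z +
      g a * (∏ l ∈ Finset.range i, (-1 - l : ℂ))) (𝓝[≠] a)
      (𝓝 (0 * iteratedDeriv i A a + g a * (∏ l ∈ Finset.range i, (-1 - l : ℂ)))) := by
    apply Filter.Tendsto.mono_left _ nhdsWithin_le_nhds
    apply Filter.Tendsto.add _ tendsto_const_nhds
    apply Filter.Tendsto.mul
    · have h : Filter.Tendsto (fun z : ℂ => z - a) (𝓝 a) (𝓝 0) := by
        have := ((continuous_id (X := ℂ)).sub (continuous_const (y := a))).tendsto a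
        simpa [Pi.sub_def] using this
      simpa using (h.pow (i + 1))
    · exact ((hAd i a (mem_ball_self (by norm_num))).continuousAt)
  simpa [hvalue] using hlim
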